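/- The polynomials sₙ defined by sₙ'' + sₙ = −xⁿ (with sₙ polynomial of degree n) satisfy sₙ(x) = (iⁿ/2)·[(−1)^{n+1} eₙ(ix) − eₙ(−ix)] for all real x, where eₙ are extended to ℂ. -/

import Mathlib

noncomputable def eC (n : ℕ) (z : ℂ) : ℂ :=
  ∑ l ∈ Finset.range (n + 1), (-1 : ℂ) ^ (n + l) * ((n.factorial : ℂ) / (l.factorial : ℂ)) * z ^ l

open Polynomial

noncomputable def cc (n l : ℕ) : ℂ :=
  (-1 : ℂ) ^ (n + l) * ((n.factorial : ℂ) / (l.factorial : ℂ)) *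
    Complex.I ^ (n + l) * ((-1 : ℂ) ^ (n + 1) - (-1 : ℂ) ^ l) / 2

noncomputable def SS (n : ℕ) : ℂ[X] :=
  ∑ l ∈ Finset.range (n + 1), C (cc n l) * X ^ l

lemma coeff_SS (n m : ℕ) : (SS n).coeff m = if m ≤ n then cc n m else 0 := by
  simp [SS, Polynomial.coeff_X_pow, Finset.sum_ite_eq', Finset.mem_range, Nat.lt_succ_iff]

lemma cc_rec (n m : ℕ) : cc n (m + 2) * ((m : ℂ) + 2) * ((m : ℂ) + 1) = -cc n m := by
  unfold cc
  have hfac : (((m + 2).factorial : ℂ)) = ((m : ℂ) + 2) * ((m : ℂ) + 1) * (m.factorial : ℂ) := by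
    rw [show m + 2 = (m + 1) + 1 by ring, Nat.factorial_succ, Nat.factorial_succ]
    push_cast; ring
  have hm : (m.factorial : ℂ) ≠ 0 := Nat.cast_ne_zero.2 m.factorial_ne_zero
  have hm2 : ((m : ℂ) + 2) ≠ 0 := by
    have h := Nat.cast_ne_zero (R := ℂ) |>.2 (by omega : m + 2 ≠ 0)
    push_cast at h; exact h
  have hm1 : ((m : ℂ) + 1) ≠ 0 := by
    have h := Nat.cast_ne_zero (R := ℂ) |>.2 (by omega : m + 1 ≠ 0)
    push_cast at h; exact h
  have hI : Complex.I ^ (n + (m + 2)) = -Complex.I ^ (n + m) := by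
    rw [show n + (m + 2) = (n + m) + 2 by ring, pow_add, Complex.I_sq]; ring
  have hs : ((-1 : ℂ)) ^ (n + (m + 2)) = (-1 : ℂ) ^ (n + m) := by
    rw [show n + (m + 2) = (n + m) + 2 by ring, pow_add, neg_one_sq]; ring
  have hs2 : ((-1 : ℂ)) ^ (m + 2) = (-1 : ℂ) ^ m := by
    rw [pow_add, neg_one_sq]; ring
  rw [hfac, hI, hs, hs2]
  field_simp

lemma cc_self (n : ℕ) : cc n n = -1 := by
  unfold cc
  have h1 : (Complex.I) ^ (n + n) = (-1 : ℂ) ^ n := by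
    rw [← two_mul, pow_mul, Complex.I_sq]
  have h2 : ((-1 : ℂ)) ^ (n + n) = 1 := by
    rw [← two_mul, pow_mul, neg_one_sq, one_pow]
  have hfac : ((n.factorial : ℂ)) / ((n.factorial : ℂ)) = 1 :=
    div_self (Nat.cast_ne_zero.2 n.factorial_ne_zero)
  rw [h1, h2, hfac, pow_succ]
  have ht : ((-1 : ℂ) ^ n) * ((-1 : ℂ) ^ n) = 1 := by
    rw [← pow_add, ← two_mul, pow_mul, neg_one_sq, one_pow]
  linear_combination -ht

lemma cc_succ (m : ℕ) : cc (m + 1) m = 0 := by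
  unfold cc
  have : ((-1 : ℂ)) ^ (m + 1 + 1) = (-1 : ℂ) ^ m := by
    rw [pow_succ, pow_succ]; ring
  rw [this]
  ring

lemma SS_ode (n : ℕ) : derivative (derivative (SS n)) + SS n = -(X ^ n : ℂ[X]) := by
  ext m
  rw [coeff_add, coeff_derivative, coeff_derivative, coeff_neg, coeff_X_pow,
    coeff_SS, coeff_SS]
  by_cases h2 : m + 2 ≤ n
  · rw [if_pos h2, if_pos (by omega : m ≤ n), if_neg (by omega : ¬ m = n)]
    have := cc_rec n m
    push_cast
    linear_combination this
  · by_cases hm : m ≤ n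
    · rw [if_neg h2, if_pos hm]
      by_cases he : m = n
      · subst he
        rw [if_pos rfl, cc_self]; ring
      · have hmn : n = m + 1 := by omega
        subst hmn
        rw [if_neg (by omega), cc_succ]; ring
    · rw [if_neg h2, if_neg hm, if_neg (by omega)]; ring

lemma ode_unique (q : ℂ[X]) (h : derivative (derivative q) + q = 0) : q = 0 := by
  have hq : q = -(derivative (derivative q)) := eq_neg_of_add_eq_zero_right h
  have hd1 := Polynomial.natDegree_derivative_le (derivative q)
  have hd2 := Polynomial.natDegree_derivative_le q
  have h3 : q.natDegree = (derivative (derivative q)).natDegree := by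
    conv_lhs => rw [hq]
    rw [natDegree_neg]
  have h0 : q.natDegree = 0 := by omega
  obtain ⟨a, rfl⟩ := Polynomial.natDegree_eq_zero.mp h0
  simpa using h

open Polynomial in
theorem stmt12 (n : ℕ) (p : ℝ[X]) (hdeg : p.natDegree = n)
    (hode : derivative (derivative p) + p = -(X ^ n)) (x : ℝ) :
    ((p.eval x : ℝ) : ℂ) = Complex.I ^ n / 2 *
      ((-1 : ℂ) ^ (n + 1) * eC n (Complex.I * x) - eC n (-(Complex.I * x))) := by
  set P := p.map (algebraMap ℝ ℂ) with hPdef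
  have hPode : derivative (derivative P) + P = -(X ^ n : ℂ[X]) := by
    rw [hPdef, Polynomial.derivative_map, Polynomial.derivative_map,
      ← Polynomial.map_add, hode]
    simp
  have hPS : P = SS n := by
    have hz : derivative (derivative (P - SS n)) + (P - SS n) = 0 := by
      rw [derivative_sub, derivative_sub]
      have := SS_ode n
      rw [show derivative (derivative P) - derivative (derivative (SS n)) + (P - SS n)
          = (derivative (derivative P) + P) - (derivative (derivative (SS n)) + SS n) by ring,
        hPode, this]
      ring
    have := ode_unique _ hz
    exact sub_eq_zero.mp this
  have heval : ((p.eval x : ℝ) : ℂ) = P.eval (x : ℂ) := by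
    rw [hPdef, Polynomial.eval_map]
    exact (Polynomial.eval₂_at_apply (algebraMap ℝ ℂ) x).symm
  rw [heval, hPS]
  unfold SS eC
  rw [Finset.mul_sum, ← Finset.sum_sub_distrib, Finset.mul_sum, Polynomial.eval_finset_sum]
  refine Finset.sum_congr rfl fun l _ => ?_
  rw [Polynomial.eval_mul, Polynomial.eval_C, Polynomial.eval_pow, Polynomial.eval_X]
  unfold cc
  rw [neg_pow (Complex.I * (x : ℂ)) l, mul_pow, pow_add Complex.I n l, pow_add (-1 : ℂ) n l]
  ring
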